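/- Ball-positivity does not imply symmetry: there exists a 3×3 real matrix A with nonnegative entries, all row sums equal to 1 and all column sums equal to 1 (doubly stochastic), such that A is not symmetric (A ≠ Aᵀ), yet A is ball-positive with respect to the standard inner product on ℝ³: ⟨Au, u⟩ ≥ ‖Au‖² for all u ∈ ℝ³. -/
import Mathlib


/-- ball-positivity does not imply symmetry: there is a non-symmetric doubly
stochastic `3 × 3` matrix that is ball-positive for the standard inner product on `ℝ³`. -/
theorem exists_ballPositive_not_symmetric :
    ∃ A : Matrix (Fin 3) (Fin 3) ℝ,
      (∀ i j, 0 ≤ A i j) ∧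
      (∀ i, ∑ j, A i j = 1) ∧
      (∀ j, ∑ i, A i j = 1) ∧
      A ≠ A.transpose ∧
      (∀ u : Fin 3 → ℝ, ∑ i, (A.mulVec u i) ^ 2 ≤ ∑ i, A.mulVec u i * u i) := by
  refine ⟨!![1/2, 1/2, 0; 0, 1/2, 1/2; 1/2, 0, 1/2], ?_, ?_, ?_, ?_, ?_⟩
  · intro i j; fin_cases i <;> fin_cases j <;> norm_num
  · intro i; fin_cases i <;> simp [Fin.sum_univ_three, Matrix.vecHead, Matrix.vecTail] <;> norm_num
  · intro j; fin_cases j <;> simp [Fin.sum_univ_three, Matrix.vecHead, Matrix.vecTail] <;> norm_num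
  · intro h
    have := congrFun (congrFun h 0) 1
    simp [Matrix.transpose] at this
  · intro u
    apply le_of_eq
    simp [Matrix.mulVec, dotProduct, Fin.sum_univ_three, Matrix.vecHead, Matrix.vecTail]
    ring
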